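/- For n a positive integer, define c(n) = Σ_{d|n} φ(gcd(d, n/d)) and i(n) = n·∏_{p|n}(1+1/p). Then i(n)/24 - c(n)/2 → ∞ as n → ∞; in particular, for all sufficiently large n, i(n) > 12·c(n). -/

import Mathlib

open Filter Finset

/-- `i(n) = n·∏_{p|n}(1 + 1/p)`, the index of `Γ₀(n)` in `SL₂(ℤ)`. -/
noncomputable def gammaIndex (n : ℕ) : ℚ := n * ∏ p ∈ n.primeFactors, (1 + 1 / (p : ℚ))

/-- `c(n) = Σ_{d|n} φ(gcd(d, n/d))`, the number of cusps of `Γ₀(n)`. -/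
def cuspCount (n : ℕ) : ℕ := ∑ d ∈ n.divisors, Nat.totient (Nat.gcd d (n / d))

lemma card_divisors_le (n : ℕ) : n.divisors.card ≤ 2 * Nat.sqrt n := by
  classical
  have h := Finset.card_le_card_of_injOn
    (s := n.divisors) (f := fun d => ((if d * d ≤ n then d else n / d), decide (d * d ≤ n)))
    (t := Finset.Icc 1 n.sqrt ×ˢ (Finset.univ : Finset Bool)) ?_ ?_
  · simpa [Nat.card_Icc, Nat.mul_comm] using h
  · intro d hd
    obtain ⟨hdvd, hn⟩ := Nat.mem_divisors.mp hd
    have hd0 : 0 < d := Nat.pos_of_mem_divisors hd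
    simp only [Finset.mem_coe, Finset.mem_product, Finset.mem_Icc, Finset.mem_univ, and_true]
    split_ifs with h1
    · exact ⟨hd0, Nat.le_sqrt.mpr h1⟩
    · push_neg at h1
      constructor
      · exact Nat.one_le_div_iff hd0 |>.mpr (Nat.le_of_dvd (Nat.pos_of_ne_zero hn) hdvd)
      · rw [Nat.le_sqrt]
        have hmul : d * (n / d) = n := Nat.mul_div_cancel' hdvd
        have : n / d < d := by
          by_contra hc
          push_neg at hc
          nlinarith [hmul]
        calc n / d * (n / d) ≤ n / d * d := Nat.mul_le_mul_left _ this.le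
          _ = n := by rw [Nat.mul_comm]; exact hmul
  · intro d1 h1 d2 h2 heq
    obtain ⟨hdvd1, hn⟩ := Nat.mem_divisors.mp h1
    obtain ⟨hdvd2, -⟩ := Nat.mem_divisors.mp h2
    simp only [Prod.mk.injEq, decide_eq_decide] at heq
    by_cases hc1 : d1 * d1 ≤ n
    · have hc2 : d2 * d2 ≤ n := heq.2.mp hc1
      simpa [if_pos hc1, if_pos hc2] using heq.1
    · have hc2 : ¬ d2 * d2 ≤ n := fun h => hc1 (heq.2.mpr h)
      have : n / d1 = n / d2 := by simpa [if_neg hc1, if_neg hc2] using heq.1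
      have e1 : n / (n / d1) = d1 := Nat.div_div_self hdvd1 hn
      have e2 : n / (n / d2) = d2 := Nat.div_div_self hdvd2 hn
      rw [← e1, this, e2]

noncomputable def sqPart (n : ℕ) : ℕ := ∏ p ∈ n.primeFactors, p ^ (n.factorization p / 2)

lemma sqPart_pos (n : ℕ) : 0 < sqPart n := by
  apply Finset.prod_pos
  intro p hp
  exact pow_pos (Nat.Prime.pos (Nat.prime_of_mem_primeFactors hp)) _

lemma sqPart_factorization (n : ℕ) (q : ℕ) :
    (sqPart n).factorization q = n.factorization q / 2 := by
  rw [sqPart, Nat.factorization_prod (fun p hp => pow_ne_zero _ (Nat.Prime.ne_zero (Nat.prime_of_mem_primeFactors hp)))]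
  rw [Finset.sum_apply']
  have h : ∀ p ∈ n.primeFactors, (p ^ (n.factorization p / 2)).factorization q
      = if p = q then n.factorization p / 2 else 0 := by
    intro p hp
    rw [Nat.Prime.factorization_pow (Nat.prime_of_mem_primeFactors hp), Finsupp.single_apply]
  rw [Finset.sum_congr rfl h, Finset.sum_ite_eq' n.primeFactors q (fun p => n.factorization p / 2)]
  by_cases hmem : q ∈ n.primeFactors
  · simp [hmem]
  · simp only [hmem, if_false]
    have h0 : n.factorization q = 0 := by
      have := Nat.support_factorization n
      rw [← this] at hmem
      exact Finsupp.notMem_support_iff.mp hmem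
    omega

lemma sqPart_sq_dvd (n : ℕ) (hn : n ≠ 0) : sqPart n * sqPart n ∣ n := by
  have hs : sqPart n ≠ 0 := (sqPart_pos n).ne'
  rw [← Nat.factorization_le_iff_dvd (Nat.mul_ne_zero hs hs) hn]
  intro q
  rw [Nat.factorization_mul hs hs, Finsupp.add_apply, sqPart_factorization]
  omega

lemma dvd_sqPart (n e : ℕ) (hn : n ≠ 0) (he : e ≠ 0) (h : e * e ∣ n) : e ∣ sqPart n := by
  rw [← Nat.factorization_le_iff_dvd he (sqPart_pos n).ne' ]
  intro q
  rw [sqPart_factorization]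
  have : (e * e).factorization q ≤ n.factorization q :=
    (Nat.factorization_le_iff_dvd (Nat.mul_ne_zero he he) hn).mpr h q
  rw [Nat.factorization_mul he he, Finsupp.add_apply] at this
  omega

lemma fiber_card_le (n e : ℕ) (hn : n ≠ 0) (he : e ≠ 0) :
    ((n.divisors).filter (fun d => Nat.gcd d (n / d) = e)).card
      ≤ (n / (e * e)).divisors.card := by
  classical
  apply Finset.card_le_card_of_injOn (fun d => d / e)
  · intro d hd
    simp only [Finset.mem_coe, Finset.mem_filter] at hd
    obtain ⟨hd', hg⟩ := hd
    obtain ⟨hdvd, -⟩ := Nat.mem_divisors.mp hd'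
    have hed : e ∣ d := hg ▸ Nat.gcd_dvd_left d (n / d)
    have hend : e ∣ n / d := hg ▸ Nat.gcd_dvd_right d (n / d)
    have hee : e * e ∣ n := by
      have := Nat.mul_dvd_mul hed hend
      rwa [Nat.mul_div_cancel' hdvd] at this
    rw [Finset.mem_coe, Nat.mem_divisors]
    refine ⟨?_, ?_⟩
    · -- d / e ∣ n / (e*e)
      obtain ⟨a, ha⟩ := hed
      obtain ⟨b, hb⟩ := hend
      have hde : 0 < e := Nat.pos_of_ne_zero he
      have hn' : n = e * e * (a * b) := by
        have h3 : d * (n / d) = n := Nat.mul_div_cancel' hdvd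
        rw [hb, ha] at h3
        rw [← h3]; ring
      refine ⟨b, ?_⟩
      have hde2 : d / e = a := by rw [ha]; exact Nat.mul_div_cancel_left a hde
      have hne : n / (e * e) = a * b := by
        rw [hn']; exact Nat.mul_div_cancel_left _ (Nat.mul_pos hde hde)
      beta_reduce; rw [hde2, hne]
    · have hle : e * e ≤ n := Nat.le_of_dvd (Nat.pos_of_ne_zero hn) hee
      exact Nat.div_ne_zero_iff.mpr ⟨Nat.mul_ne_zero he he, hle⟩
  · intro d1 h1 d2 h2 heq
    simp only [Finset.coe_filter, Set.mem_setOf_eq] at h1 h2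
    have he1 : e ∣ d1 := h1.2 ▸ Nat.gcd_dvd_left _ _
    have he2 : e ∣ d2 := h2.2 ▸ Nat.gcd_dvd_left _ _
    have h3 : d1 / e * e = d2 / e * e := by simp only at heq; rw [heq]
    rwa [Nat.div_mul_cancel he1, Nat.div_mul_cancel he2] at h3

lemma cuspCount_le (n : ℕ) (hn : n ≠ 0) :
    cuspCount n ≤ 4 * Nat.sqrt n * Nat.sqrt (Nat.sqrt n) := by
  classical
  set S : Finset ℕ := (sqPart n).divisors with hS
  have hmaps : ∀ d ∈ n.divisors, Nat.gcd d (n / d) ∈ S := by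
    intro d hd
    obtain ⟨hdvd, -⟩ := Nat.mem_divisors.mp hd
    have hd0 : 0 < d := Nat.pos_of_mem_divisors hd
    have hg0 : Nat.gcd d (n / d) ≠ 0 := (Nat.gcd_pos_of_pos_left _ hd0).ne'
    have hgg : Nat.gcd d (n / d) * Nat.gcd d (n / d) ∣ n := by
      have := Nat.mul_dvd_mul (Nat.gcd_dvd_left d (n / d)) (Nat.gcd_dvd_right d (n / d))
      rwa [Nat.mul_div_cancel' hdvd] at this
    exact Nat.mem_divisors.mpr ⟨dvd_sqPart n _ hn hg0 hgg, (sqPart_pos n).ne'⟩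
  have key := Finset.sum_fiberwise_of_maps_to hmaps (fun d => Nat.totient (Nat.gcd d (n / d)))
  rw [cuspCount, ← key]
  have hbound : ∀ e ∈ S, (∑ d ∈ n.divisors.filter (fun d => Nat.gcd d (n / d) = e),
      Nat.totient (Nat.gcd d (n / d))) ≤ 2 * Nat.sqrt n := by
    intro e heS
    have he0 : e ≠ 0 := (Nat.pos_of_mem_divisors heS).ne'
    have hee : e * e ∣ n := by
      have h1 : e ∣ sqPart n := (Nat.mem_divisors.mp heS).1
      exact dvd_trans (Nat.mul_dvd_mul h1 h1) (sqPart_sq_dvd n hn)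
    calc (∑ d ∈ n.divisors.filter (fun d => Nat.gcd d (n / d) = e),
          Nat.totient (Nat.gcd d (n / d)))
        ≤ ∑ _d ∈ n.divisors.filter (fun d => Nat.gcd d (n / d) = e), e := by
          apply Finset.sum_le_sum
          intro d hd
          rw [(Finset.mem_filter.mp hd).2]
          exact Nat.totient_le e
      _ = (n.divisors.filter (fun d => Nat.gcd d (n / d) = e)).card * e := by
          rw [Finset.sum_const, smul_eq_mul]
      _ ≤ (n / (e * e)).divisors.card * e :=
          Nat.mul_le_mul_right e (fiber_card_le n e hn he0)
      _ ≤ (2 * Nat.sqrt (n / (e * e))) * e :=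
          Nat.mul_le_mul_right e (card_divisors_le _)
      _ = 2 * (Nat.sqrt (n / (e * e)) * e) := by ring
      _ ≤ 2 * Nat.sqrt n := by
          apply Nat.mul_le_mul_left
          rw [Nat.le_sqrt]
          have h1 : Nat.sqrt (n / (e * e)) * Nat.sqrt (n / (e * e)) ≤ n / (e * e) :=
            Nat.sqrt_le _
          have h2 : n / (e * e) * (e * e) = n := Nat.div_mul_cancel hee
          calc Nat.sqrt (n / (e * e)) * e * (Nat.sqrt (n / (e * e)) * e)
              = Nat.sqrt (n / (e * e)) * Nat.sqrt (n / (e * e)) * (e * e) := by ring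
            _ ≤ n / (e * e) * (e * e) := Nat.mul_le_mul_right _ h1
            _ = n := h2
  calc (∑ e ∈ S, ∑ d ∈ n.divisors.filter (fun d => Nat.gcd d (n / d) = e),
        Nat.totient (Nat.gcd d (n / d)))
      ≤ ∑ _e ∈ S, 2 * Nat.sqrt n := Finset.sum_le_sum hbound
    _ = S.card * (2 * Nat.sqrt n) := by rw [Finset.sum_const, smul_eq_mul]
    _ ≤ (2 * Nat.sqrt (sqPart n)) * (2 * Nat.sqrt n) :=
        Nat.mul_le_mul_right _ (card_divisors_le _)
    _ ≤ (2 * Nat.sqrt (Nat.sqrt n)) * (2 * Nat.sqrt n) := by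
        have hsp : sqPart n ≤ Nat.sqrt n := by
          rw [Nat.le_sqrt]
          exact Nat.le_of_dvd (Nat.pos_of_ne_zero hn) (sqPart_sq_dvd n hn)
        exact Nat.mul_le_mul_right _ (Nat.mul_le_mul_left _ (Nat.sqrt_le_sqrt hsp))
    _ = 4 * Nat.sqrt n * Nat.sqrt (Nat.sqrt n) := by ring

lemma cusp_small (n : ℕ) (hn : 384 ^ 4 ≤ n) : 96 * cuspCount n ≤ n := by
  have hn0 : n ≠ 0 := by positivity
  have hc := cuspCount_le n hn0
  set a := Nat.sqrt n with ha
  set b := Nat.sqrt a with hb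
  have haa : a * a ≤ n := Nat.sqrt_le n
  have hbb : b * b ≤ a := Nat.sqrt_le a
  have h4 : (384 * (a * b)) ^ 4 ≤ n ^ 4 := by
    have h1 : (a * b) ^ 4 ≤ n ^ 3 := by
      calc (a * b) ^ 4 = (a * a) * (a * a) * ((b * b) * (b * b)) := by ring
        _ ≤ n * n * (a * a) := by
            apply Nat.mul_le_mul (Nat.mul_le_mul haa haa) (Nat.mul_le_mul hbb hbb)
        _ ≤ n * n * n := Nat.mul_le_mul_left _ haa
        _ = n ^ 3 := by ring
    calc (384 * (a * b)) ^ 4 = 384 ^ 4 * (a * b) ^ 4 := by ring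
      _ ≤ 384 ^ 4 * n ^ 3 := Nat.mul_le_mul_left _ h1
      _ ≤ n * n ^ 3 := Nat.mul_le_mul_right _ hn
      _ = n ^ 4 := by ring
  have h5 : 384 * (a * b) ≤ n := (Nat.pow_le_pow_iff_left (by norm_num)).mp h4
  calc 96 * cuspCount n ≤ 96 * (4 * a * b) := Nat.mul_le_mul_left _ hc
    _ = 384 * (a * b) := by ring
    _ ≤ n := h5

lemma le_gammaIndex (n : ℕ) : (n : ℚ) ≤ gammaIndex n := by
  rw [gammaIndex]
  have h1 : (1:ℚ) ≤ ∏ p ∈ n.primeFactors, (1 + 1 / (p : ℚ)) := by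
    calc (1:ℚ) = ∏ _p ∈ n.primeFactors, 1 := by simp
      _ ≤ ∏ p ∈ n.primeFactors, (1 + 1 / (p : ℚ)) := by
          apply Finset.prod_le_prod
          · intros; norm_num
          · intro p _
            have : (0:ℚ) ≤ 1 / (p:ℚ) := by positivity
            linarith
  nlinarith [Nat.cast_nonneg (α := ℚ) n]

theorem index_over_24_sub_cusps_over_2_tendsto_atTop :
    Tendsto (fun n : ℕ => gammaIndex n / 24 - (cuspCount n : ℚ) / 2) atTop atTop ∧
    ∀ᶠ n : ℕ in atTop, 12 * (cuspCount n : ℚ) < gammaIndex n := by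
  have hcusp : ∀ n : ℕ, 384 ^ 4 ≤ n → (cuspCount n : ℚ) ≤ (n : ℚ) / 96 := by
    intro n hn
    have := cusp_small n hn
    have hq : ((96 * cuspCount n : ℕ) : ℚ) ≤ (n : ℚ) := Nat.cast_le.mpr this
    push_cast at hq
    linarith
  constructor
  · have hdiv : Tendsto (fun n : ℕ => (n : ℚ) / 48) atTop atTop :=
      tendsto_natCast_atTop_atTop.atTop_div_const (by norm_num)
    refine tendsto_atTop_mono' atTop ?_ hdiv
    filter_upwards [eventually_ge_atTop (384 ^ 4)] with n hn
    have h1 := hcusp n hn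
    have h2 := le_gammaIndex n
    show (n : ℚ) / 48 ≤ gammaIndex n / 24 - (cuspCount n : ℚ) / 2
    linarith
  · filter_upwards [eventually_ge_atTop (384 ^ 4)] with n hn
    have h1 := hcusp n hn
    have h2 := le_gammaIndex n
    have h3 : (1:ℚ) ≤ (n:ℚ) := by
      have : 1 ≤ n := le_trans (by norm_num) hn
      exact_mod_cast this
    linarith
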